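/- Let ε ∈ [0, 1] and let K ≥ 1 be an integer such that 0 < (1 − ε)/K < (1 + ε)/K < 1/4. Then for every integer Q with 0 ≤ Q ≤ K, one has (1 − (1+ε)/K)^{K−Q} · [ (1 − (1−ε)/K)^Q − (1 − (1+ε)/K)^Q ] ≥ 2 Q ε / (e^4 K). Equivalently, in the bandit instance whose weight vector w takes value (1+ε)/K on a K-element set A ⊆ [L] and value (1−ε)/K on [L] \ A, any ordered K-tuple S containing exactly Q items outside A satisfies r(A | w) − r(S | w) ≥ 2 Q ε / (e^4 K). -/

import Mathlib

lemma aux_pow_sub_pow (x y : ℝ) (hy : 0 ≤ y) (hxy : y ≤ x) :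
    ∀ n : ℕ, ((n : ℝ) + 1) * (x - y) * y ^ n ≤ x ^ (n + 1) - y ^ (n + 1) := by
  intro n
  induction n with
  | zero => simp
  | succ n ih =>
      have hpow : y ^ n ≤ x ^ n := pow_le_pow_left₀ hy hxy n
      have hyn : (0:ℝ) ≤ y ^ n := pow_nonneg hy n
      have hx : 0 ≤ x := le_trans hy hxy
      have key : x ^ (n + 2) - y ^ (n + 2)
          = x * (x ^ (n + 1) - y ^ (n + 1)) + (x - y) * y ^ (n + 1) := by ring
      have hstuff : (0:ℝ) ≤ ((n:ℝ) + 1) * (x - y) * y ^ n := by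
        have : 0 ≤ x - y := by linarith
        positivity
      have hA := mul_le_mul_of_nonneg_left ih hx
      have hB := mul_le_mul_of_nonneg_right hxy hstuff
      have hC : ((n:ℝ)+1+1)*(x-y)*y^(n+1) = y*(((n:ℝ)+1)*(x-y)*y^n) + (x-y)*y^(n+1) := by
        ring
      push_cast
      linarith [hA, hB, hC, key]

lemma aux_exp_le (x : ℝ) (hx0 : 0 ≤ x) (hx : x ≤ 1/2) : Real.exp (-(2*x)) ≤ 1 - x := by
  have h1 : 2*x + 1 ≤ Real.exp (2*x) := Real.add_one_le_exp (2*x)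
  have h2 : 0 < 1 + 2*x := by linarith
  have h3 : Real.exp (-(2*x)) = (Real.exp (2*x))⁻¹ := by
    rw [Real.exp_neg]
  rw [h3]
  have h4 : (Real.exp (2*x))⁻¹ ≤ (1 + 2*x)⁻¹ := by
    apply inv_anti₀ h2 (by linarith)
  have h5 : (1 + 2*x)⁻¹ ≤ 1 - x := by
    rw [inv_le_iff_one_le_mul₀ h2]
    nlinarith
  linarith

/-- For `ε ∈ [0,1]` and `K ≥ 1` with `0 < (1-ε)/K < (1+ε)/K < 1/4`, and any
integer `0 ≤ Q ≤ K`,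
`(1 - (1+ε)/K)^{K-Q} ((1 - (1-ε)/K)^Q - (1 - (1+ε)/K)^Q) ≥ 2 Q ε / (e⁴ K)`;
this is the instantaneous regret lower bound for a list containing exactly `Q` suboptimal items
in the hard instances of the lower-bound proof. -/
theorem stmt_10 (K : ℕ) (hK : 1 ≤ K) (ε : ℝ) (hε0 : 0 ≤ ε) (hε1 : ε ≤ 1)
    (h1 : 0 < (1 - ε) / K) (h2 : (1 - ε) / K < (1 + ε) / K) (h3 : (1 + ε) / K < 1 / 4)
    (Q : ℕ) (hQ : Q ≤ K) :
    2 * Q * ε / (Real.exp 4 * K)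
      ≤ (1 - (1 + ε) / K) ^ (K - Q) * ((1 - (1 - ε) / K) ^ Q - (1 - (1 + ε) / K) ^ Q) := by
  have hKpos : (0:ℝ) < K := by exact_mod_cast Nat.pos_of_ne_zero (by omega)
  set a : ℝ := (1 - ε) / K with ha
  set b : ℝ := (1 + ε) / K with hb
  have hb0 : 0 < b := lt_trans h1 h2
  have hb4 : b < 1/4 := h3
  have hbK : b * K = 1 + ε := by
    rw [hb]; exact div_mul_cancel₀ _ hKpos.ne'
  -- Q = 0 case
  rcases Nat.eq_zero_or_pos Q with hQ0 | hQpos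
  · subst hQ0; simp
  obtain ⟨q, rfl⟩ : ∃ q, Q = q + 1 := ⟨Q - 1, by omega⟩
  -- main chain
  have hab : 0 ≤ 1 - b := by linarith
  have hab' : 1 - b ≤ 1 - a := by linarith
  have hdiff : ((q:ℝ) + 1) * ((1-a) - (1-b)) * (1-b) ^ q
      ≤ (1-a) ^ (q+1) - (1-b) ^ (q+1) :=
    aux_pow_sub_pow (1-a) (1-b) hab hab' q
  have hba : (1-a) - (1-b) = 2 * ε / K := by
    rw [ha, hb]; field_simp; ring
  -- lower bound (1-b)^(K-1) ≥ exp(-4)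
  have hexp : Real.exp (-(2*b)) ≤ 1 - b := aux_exp_le b hb0.le (by linarith)
  have hexp0 : (0:ℝ) ≤ Real.exp (-(2*b)) := (Real.exp_pos _).le
  have hpow : Real.exp (-(2*b)) ^ (K-1) ≤ (1-b) ^ (K-1) :=
    pow_le_pow_left₀ hexp0 hexp _
  have hexppow : Real.exp (-(2*b)) ^ (K-1) = Real.exp (((K-1:ℕ):ℝ) * (-(2*b))) :=
    (Real.exp_nat_mul _ _).symm
  have hK1 : ((K-1 : ℕ) : ℝ) = (K:ℝ) - 1 := by
    have : (1:ℕ) ≤ K := hK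
    push_cast [Nat.cast_sub this]; ring
  have hexp4 : Real.exp (-4) ≤ (1-b) ^ (K-1) := by
    refine le_trans ?_ hpow
    rw [hexppow]
    apply Real.exp_le_exp.mpr
    rw [hK1]
    nlinarith [hbK]
  -- combine powers: (1-b)^(K-(q+1)) * (1-b)^q = (1-b)^(K-1)
  have hpows : (1-b) ^ (K - (q+1)) * (1-b) ^ q = (1-b) ^ (K-1) := by
    rw [← pow_add]
    congr 1
    omega
  have hposfac : (0:ℝ) ≤ (1-b) ^ (K - (q+1)) := pow_nonneg hab _
  have step1 : (1-b) ^ (K - (q+1)) * (((q:ℝ)+1) * (2*ε/K) * (1-b)^q)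
      ≤ (1-b) ^ (K - (q+1)) * ((1-a) ^ (q+1) - (1-b) ^ (q+1)) := by
    apply mul_le_mul_of_nonneg_left _ hposfac
    rw [← hba]; exact hdiff
  have lhs_eq : (1-b) ^ (K - (q+1)) * (((q:ℝ)+1) * (2*ε/K) * (1-b)^q)
      = ((q:ℝ)+1) * (2*ε/K) * (1-b)^(K-1) := by
    rw [← hpows]; ring
  have final : 2 * ((q:ℝ)+1) * ε / (Real.exp 4 * K)
      ≤ ((q:ℝ)+1) * (2*ε/K) * (1-b)^(K-1) := by
    have hc : (0:ℝ) ≤ ((q:ℝ)+1) * (2*ε/K) := by positivity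
    have := mul_le_mul_of_nonneg_left hexp4 hc
    have hrw : ((q:ℝ)+1) * (2*ε/K) * Real.exp (-4)
        = 2 * ((q:ℝ)+1) * ε / (Real.exp 4 * K) := by
      rw [Real.exp_neg]
      field_simp
    linarith [this, hrw ▸ this]
  calc 2 * (((q:ℕ)+1 : ℕ):ℝ) * ε / (Real.exp 4 * K)
      = 2 * ((q:ℝ)+1) * ε / (Real.exp 4 * K) := by push_cast; ring
    _ ≤ ((q:ℝ)+1) * (2*ε/K) * (1-b)^(K-1) := final
    _ = (1-b) ^ (K - (q+1)) * (((q:ℝ)+1) * (2*ε/K) * (1-b)^q) := lhs_eq.symm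
    _ ≤ (1-b) ^ (K - (q+1)) * ((1-a) ^ (q+1) - (1-b) ^ (q+1)) := step1
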